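/- Let X = 𝕋² = (ℝ/ℤ)² and let σ be a topological measure on X which is invariant under all translations of X. Let k, l be coprime integers, φ(p,q) = l·p − k·q, and for a natural number N ≥ 1 let W = φ⁻¹(π([0, 1/(2N)])) be the closed linear annulus of slope (k,l) and area 1/(2N). Then σ(W) ≥ 1/N − 1/(2N−1). -/

import Mathlib

/-- A topological measure (Aarnes) on a compact Hausdorff space `Z`. -/
structure IsTopMeasure {Z : Type*} [TopologicalSpace Z] (τ : Set Z → ℝ) : Prop where
  mem_Icc : ∀ A : Set Z, IsOpen A ∨ IsClosed A → τ A ∈ Set.Icc (0 : ℝ) 1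
  univ : τ Set.univ = 1
  compl_add : ∀ K : Set Z, IsCompact K → τ Kᶜ + τ K = 1
  add : ∀ K K' : Set Z, IsCompact K → IsCompact K' → Disjoint K K' →
      τ (K ∪ K') = τ K + τ K'
  mono : ∀ K K' : Set Z, IsCompact K → IsCompact K' → K ⊆ K' → τ K ≤ τ K'
  inner_reg : ∀ U : Set Z, IsOpen U →
      IsLUB {r : ℝ | ∃ K : Set Z, IsCompact K ∧ K ⊆ U ∧ τ K = r} (τ U)

/-- The two-dimensional torus `𝕋² = (ℝ/ℤ)²`. -/
abbrev Torus2 := UnitAddCircle × UnitAddCircle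

open Set

section Aux

variable {Z : Type*} [TopologicalSpace Z]

lemma itm_empty {σ : Set Z → ℝ} (hσ : IsTopMeasure σ) : σ ∅ = 0 := by
  have h := hσ.compl_add ∅ isCompact_empty
  rw [Set.compl_empty, hσ.univ] at h
  linarith

lemma itm_le_one [CompactSpace Z] {σ : Set Z → ℝ} (hσ : IsTopMeasure σ) {K : Set Z}
    (hK : IsCompact K) : σ K ≤ 1 := by
  have h := hσ.mono K Set.univ hK isCompact_univ (Set.subset_univ K)
  rwa [hσ.univ] at h

lemma itm_sum {σ : Set Z → ℝ} (hσ : IsTopMeasure σ) (C : ℕ → Set Z) :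
    ∀ n : ℕ, (∀ i, i < n → IsCompact (C i)) →
      (∀ i j, i < n → j < n → i ≠ j → Disjoint (C i) (C j)) →
      σ (⋃ i ∈ Finset.range n, C i) = ∑ i ∈ Finset.range n, σ (C i) := by
  intro n
  induction n with
  | zero => simp [itm_empty hσ]
  | succ n ih =>
    intro hc hd
    have hcu : IsCompact (⋃ i ∈ Finset.range n, C i) := by
      apply Set.Finite.isCompact_biUnion (Finset.finite_toSet _)
      intro i hi
      exact hc i (lt_of_lt_of_le (Finset.mem_range.mp hi) (Nat.le_succ n))
    have hdisj : Disjoint (C n) (⋃ i ∈ Finset.range n, C i) := by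
      rw [Set.disjoint_iUnion₂_right]
      intro i hi
      exact hd n i (Nat.lt_succ_self n)
        (lt_of_lt_of_le (Finset.mem_range.mp hi) (Nat.le_succ n))
        (Nat.ne_of_gt (Finset.mem_range.mp hi))
    rw [Finset.range_add_one, Finset.set_biUnion_insert, Finset.sum_insert (by simp),
      hσ.add (C n) _ (hc n (Nat.lt_succ_self n)) hcu hdisj,
      ih (fun i hi => hc i (lt_of_lt_of_le hi (Nat.le_succ n)))
        (fun i j hi hj hij => hd i j (lt_of_lt_of_le hi (Nat.le_succ n))
          (lt_of_lt_of_le hj (Nat.le_succ n)) hij)]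

lemma itm_open_le {σ : Set Z → ℝ} (hσ : IsTopMeasure σ) {U : Set Z} (hU : IsOpen U) {c : ℝ}
    (h : ∀ K : Set Z, IsCompact K → K ⊆ U → σ K ≤ c) : σ U ≤ c :=
  (hσ.inner_reg U hU).2 (by rintro r ⟨K, h1, h2, rfl⟩; exact h K h1 h2)

end Aux

section Circle

lemma circ_closed (r s : ℝ) : IsClosed (((↑) : ℝ → UnitAddCircle) '' Set.Icc r s) :=
  (isCompact_Icc.image (AddCircle.continuous_mk' 1)).isClosed

lemma circ_open (r s : ℝ) : IsOpen (((↑) : ℝ → UnitAddCircle) '' Set.Ioo r s) :=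
  QuotientAddGroup.isOpenMap_coe _ isOpen_Ioo

lemma circ_disj {d : ℝ} {I J : Set ℝ} (hI : I ⊆ Set.Ico d (d + 1))
    (hJ : J ⊆ Set.Ico d (d + 1)) (hIJ : Disjoint I J) :
    Disjoint (((↑) : ℝ → UnitAddCircle) '' I) (((↑) : ℝ → UnitAddCircle) '' J) := by
  rw [Set.disjoint_left]
  rintro z ⟨x, hx, rfl⟩ ⟨y, hy, hxy⟩
  have : y = x := (AddCircle.coe_eq_coe_iff_of_mem_Ico (p := (1 : ℝ)) (a := d)
    (hJ hy) (hI hx)).mp hxy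
  exact Set.disjoint_left.mp hIJ hx (this ▸ hy)

lemma circ_rep (z : UnitAddCircle) :
    ∃ x : ℝ, x ∈ Set.Ico (0 : ℝ) 1 ∧ (x : UnitAddCircle) = z := by
  obtain ⟨r, rfl⟩ := QuotientAddGroup.mk_surjective z
  refine ⟨Int.fract r, ⟨Int.fract_nonneg r, Int.fract_lt_one r⟩, ?_⟩
  show (↑(Int.fract r) : UnitAddCircle) = ↑r
  rw [Int.fract, AddCircle.coe_sub]
  have : ((↑(⌊r⌋ : ℝ)) : UnitAddCircle) = 0 := by
    rw [AddCircle.coe_eq_zero_iff]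
    exact ⟨⌊r⌋, by simp⟩
  rw [this, sub_zero]

lemma circ_trans (c : ℝ) (I : Set ℝ) :
    (fun z => z + ((c : ℝ) : UnitAddCircle)) '' (((↑) : ℝ → UnitAddCircle) '' I)
      = ((↑) : ℝ → UnitAddCircle) '' ((fun r => r + c) '' I) := by
  rw [Set.image_image, Set.image_image]
  refine Set.image_congr fun r _ => ?_
  show (r : UnitAddCircle) + (c : UnitAddCircle) = ((r + c : ℝ) : UnitAddCircle)
  rw [AddCircle.coe_add]

lemma trans_preimage {G H : Type*} [AddCommGroup G] [AddCommGroup H] (g : G → H)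
    (hg : ∀ x y, g (x + y) = g x + g y) (v : G) (S : Set H) :
    (fun x => x + v) '' (g ⁻¹' S) = g ⁻¹' ((fun z => z + g v) '' S) := by
  ext x
  constructor
  · rintro ⟨y, hy, rfl⟩
    exact ⟨g y, hy, (hg y v).symm⟩
  · rintro ⟨z, hz, hzx⟩
    have h1 : g (x - v) + g v = g x := by
      rw [← hg]
      congr 1
      abel
    have h2 : z + g v = g x := hzx
    have h3 : g (x - v) = z := add_right_cancel (h1.trans h2.symm)
    refine ⟨x - v, ?_, ?_⟩
    · rw [Set.mem_preimage, h3]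
      exact hz
    · show x - v + v = x
      abel

end Circle

set_option maxHeartbeats 1600000 in
theorem topMeasure_annulus_ge (σ : Set Torus2 → ℝ) (hσ : IsTopMeasure σ)
    (hinv : ∀ v : Torus2, ∀ A : Set Torus2, IsOpen A ∨ IsClosed A →
      σ ((fun x => x + v) '' A) = σ A)
    (k l : ℤ) (hkl : IsCoprime k l) (N : ℕ) (hN : 1 ≤ N) :
    1 / (N : ℝ) - 1 / (2 * (N : ℝ) - 1) ≤
      σ ((fun x : Torus2 => l • x.1 - k • x.2) ⁻¹'
        (((↑) : ℝ → UnitAddCircle) '' Set.Icc (0 : ℝ) (1 / (2 * N)))) := by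
  obtain ⟨a, b, hab⟩ := hkl
  set f : Torus2 → UnitAddCircle := fun x => l • x.1 - k • x.2 with hf
  set q : ℝ → UnitAddCircle := ((↑) : ℝ → UnitAddCircle) with hq
  set t : ℝ := 1 / (2 * (N : ℝ)) with ht
  have hN1 : (1 : ℝ) ≤ (N : ℝ) := by exact_mod_cast hN
  have hNpos : (0 : ℝ) < (N : ℝ) := by linarith
  have ht0 : 0 < t := by rw [ht]; positivity
  have htN : 2 * (N : ℝ) * t = 1 := by rw [ht]; field_simp
  have h2N1 : (0 : ℝ) < 2 * (N : ℝ) - 1 := by linarith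
  -- f is additive and continuous
  have hfadd : ∀ x y : Torus2, f (x + y) = f x + f y := by
    intro x y
    simp only [hf, Prod.fst_add, Prod.snd_add, smul_add]
    abel
  have hfc : Continuous f := by
    exact ((continuous_zsmul l).comp continuous_fst).sub
      ((continuous_zsmul k).comp continuous_snd)
  -- translation vectors
  set vt : ℝ → Torus2 :=
    fun c => (((b * c : ℝ) : UnitAddCircle), ((-(a * c) : ℝ) : UnitAddCircle)) with hvt
  have hfvt : ∀ c : ℝ, f (vt c) = q c := by
    intro c
    show l • ((b * c : ℝ) : UnitAddCircle) - k • ((-(a * c) : ℝ) : UnitAddCircle) = q c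
    rw [← AddCircle.coe_zsmul, ← AddCircle.coe_zsmul, ← AddCircle.coe_sub, hq]
    have h2 : l • ((b : ℝ) * c) - k • (-((a : ℝ) * c)) = ((a * k + b * l : ℤ) : ℝ) * c := by
      rw [zsmul_eq_mul, zsmul_eq_mul]
      push_cast
      ring
    rw [h2, hab]
    push_cast
    ring_nf
  -- annuli
  set P : Set ℝ → Set Torus2 := fun I => f ⁻¹' (q '' I) with hP
  have htransP : ∀ (c : ℝ) (I : Set ℝ),
      (fun x => x + vt c) '' (P I) = P ((fun r => r + c) '' I) := by
    intro c I
    show (fun x => x + vt c) '' (f ⁻¹' (q '' I)) = f ⁻¹' (q '' ((fun r => r + c) '' I))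
    rw [trans_preimage f hfadd (vt c) (q '' I), hfvt]
    rw [hq]
    rw [circ_trans]
  have hPIcc_closed : ∀ r s : ℝ, IsClosed (P (Set.Icc r s)) :=
    fun r s => (circ_closed r s).preimage hfc
  have hPIcc_cpt : ∀ r s : ℝ, IsCompact (P (Set.Icc r s)) :=
    fun r s => (hPIcc_closed r s).isCompact
  have hPIoo_open : ∀ r s : ℝ, IsOpen (P (Set.Ioo r s)) :=
    fun r s => (circ_open r s).preimage hfc
  have hinvIcc : ∀ r s c : ℝ, σ (P (Set.Icc (r + c) (s + c))) = σ (P (Set.Icc r s)) := by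
    intro r s c
    rw [← Set.image_add_const_Icc, ← htransP]
    exact hinv (vt c) _ (Or.inr (hPIcc_closed r s))
  have hdisjP : ∀ (d : ℝ) (I J : Set ℝ), I ⊆ Set.Ico d (d + 1) → J ⊆ Set.Ico d (d + 1) →
      Disjoint I J → Disjoint (P I) (P J) :=
    fun d I J hI hJ h => Disjoint.preimage f (circ_disj hI hJ h)
  -- the key translation trick: a compact inside an open annulus of width t has
  -- measure at most 1/(2N-1)
  have key : ∀ (s : ℝ) (K : Set Torus2), IsCompact K → K ⊆ P (Set.Ioo s (s + t)) →
      (2 * (N : ℝ) - 1) * σ K ≤ 1 := by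
    intro s K hK hKsub
    set C : ℕ → Set Torus2 := fun m => (fun x => x + vt (m * t)) '' K with hC
    have hCc : ∀ m : ℕ, IsCompact (C m) :=
      fun m => hK.image (continuous_id.add continuous_const)
    have hCσ : ∀ m : ℕ, σ (C m) = σ K :=
      fun m => hinv (vt (m * t)) K (Or.inr hK.isClosed)
    have hCsub : ∀ m : ℕ, C m ⊆ P (Set.Ioo (s + m * t) (s + m * t + t)) := by
      intro m
      have h1 := Set.image_mono (f := (fun x => x + vt (m * t))) hKsub
      rw [htransP, Set.image_add_const_Ioo] at h1
      have : Set.Ioo (s + (m : ℝ) * t) (s + (m : ℝ) * t + t)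
          = Set.Ioo (s + (m : ℝ) * t) (s + t + (m : ℝ) * t) := by
        congr 1
        ring
      rw [hC, this]
      exact h1
    have hdis : ∀ i j, i < 2 * N - 1 → j < 2 * N - 1 → i ≠ j → Disjoint (C i) (C j) := by
      have hIoo : ∀ m : ℕ, m < 2 * N - 1 →
          Set.Ioo (s + (m : ℝ) * t) (s + (m : ℝ) * t + t) ⊆ Set.Ico s (s + 1) := by
        intro m hm x hx
        have hmr : (m : ℝ) ≤ 2 * (N : ℝ) - 2 := by
          have : (m : ℝ) + 1 ≤ ((2 * N - 1 : ℕ) : ℝ) := by exact_mod_cast hm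
          have h2 : ((2 * N - 1 : ℕ) : ℝ) = 2 * (N : ℝ) - 1 := by
            have : (1 : ℕ) ≤ 2 * N := by omega
            push_cast [Nat.cast_sub this]
            ring
          linarith [h2 ▸ this]
        constructor
        · nlinarith [hx.1, mul_nonneg (Nat.cast_nonneg m : (0:ℝ) ≤ m) ht0.le]
        · nlinarith [hx.2]
      intro i j hi hj hij
      apply Set.disjoint_of_subset (hCsub i) (hCsub j)
      apply hdisjP s _ _ (hIoo i hi) (hIoo j hj)
      rcases Nat.lt_or_ge i j with h | h
      · rw [Set.disjoint_left]
        intro x hx1 hx2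
        have : (i : ℝ) + 1 ≤ (j : ℝ) := by exact_mod_cast h
        nlinarith [hx1.2, hx2.1]
      · have hji : j < i := by omega
        rw [Set.disjoint_left]
        intro x hx1 hx2
        have : (j : ℝ) + 1 ≤ (i : ℝ) := by exact_mod_cast hji
        nlinarith [hx2.2, hx1.1]
    have hsum := itm_sum hσ C (2 * N - 1) (fun i _ => hCc i) hdis
    have hle : σ (⋃ i ∈ Finset.range (2 * N - 1), C i) ≤ 1 :=
      itm_le_one hσ
        (Set.Finite.isCompact_biUnion (Finset.finite_toSet _) fun i _ => hCc i)
    rw [hsum] at hle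
    have hsc : ∑ i ∈ Finset.range (2 * N - 1), σ (C i) = ((2 * N - 1 : ℕ) : ℝ) * σ K := by
      rw [Finset.sum_congr rfl (fun i _ => hCσ i), Finset.sum_const, Finset.card_range,
        nsmul_eq_mul]
    rw [hsc] at hle
    have hcast : ((2 * N - 1 : ℕ) : ℝ) = 2 * (N : ℝ) - 1 := by
      have h1 : (1 : ℕ) ≤ 2 * N := by omega
      push_cast [Nat.cast_sub h1]
      ring
    rwa [hcast] at hle
  -- the N disjoint closed annuli
  set w : ℝ := σ (P (Set.Icc 0 t)) with hw
  have hA : ∀ j : ℕ, σ (P (Set.Icc (2 * j * t) (2 * j * t + t))) = w := by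
    intro j
    have h1 := hinvIcc 0 t (2 * j * t)
    rw [zero_add] at h1
    have : Set.Icc (2 * (j : ℝ) * t) (2 * (j : ℝ) * t + t)
        = Set.Icc (2 * (j : ℝ) * t) (t + 2 * (j : ℝ) * t) := by
      congr 1
      ring
    rw [this, h1, hw]
  set V : Set Torus2 := ⋃ j ∈ Finset.range N, P (Set.Icc (2 * j * t) (2 * j * t + t)) with hV
  have hsubIco : ∀ j : ℕ, j < N →
      Set.Icc (2 * (j : ℝ) * t) (2 * (j : ℝ) * t + t) ⊆ Set.Ico 0 (0 + 1) := by
    intro j hj x hx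
    have hjr : (j : ℝ) ≤ (N : ℝ) - 1 := by
      have : (j : ℝ) + 1 ≤ (N : ℝ) := by exact_mod_cast hj
      linarith
    constructor
    · nlinarith [hx.1, mul_nonneg (Nat.cast_nonneg j : (0:ℝ) ≤ j) ht0.le]
    · nlinarith [hx.2]
  have hVcpt : IsCompact V :=
    Set.Finite.isCompact_biUnion (Finset.finite_toSet _) fun i _ => hPIcc_cpt _ _
  have hσV : σ V = (N : ℝ) * w := by
    rw [hV, itm_sum hσ _ N (fun i _ => hPIcc_cpt _ _) ?_]
    · rw [Finset.sum_congr rfl (fun i _ => hA i), Finset.sum_const, Finset.card_range,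
        nsmul_eq_mul]
    · intro i j hi hj hij
      apply hdisjP 0 _ _ (hsubIco i hi) (hsubIco j hj)
      rw [Set.disjoint_left]
      intro x hx1 hx2
      rcases Nat.lt_or_ge i j with h | h
      · have : (i : ℝ) + 1 ≤ (j : ℝ) := by exact_mod_cast h
        nlinarith [hx1.2, hx2.1]
      · have hji : j < i := by omega
        have : (j : ℝ) + 1 ≤ (i : ℝ) := by exact_mod_cast hji
        nlinarith [hx2.2, hx1.1]
  have hcompl := hσ.compl_add V hVcpt
  -- covering the complement by the open gaps
  set B : ℕ → Set Torus2 := fun j => P (Set.Ioo ((2 * j + 1) * t) ((2 * j + 1) * t + t))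
    with hB
  have hBsubIco : ∀ j : ℕ, j < N →
      Set.Ioo ((2 * (j : ℝ) + 1) * t) ((2 * (j : ℝ) + 1) * t + t) ⊆ Set.Ico 0 (0 + 1) := by
    intro j hj x hx
    have hjr : (j : ℝ) ≤ (N : ℝ) - 1 := by
      have : (j : ℝ) + 1 ≤ (N : ℝ) := by exact_mod_cast hj
      linarith
    constructor
    · nlinarith [hx.1, mul_nonneg (Nat.cast_nonneg j : (0:ℝ) ≤ j) ht0.le]
    · nlinarith [hx.2]
  have hBdisj : ∀ i j, i < N → j < N → i ≠ j → Disjoint (B i) (B j) := by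
    intro i j hi hj hij
    apply hdisjP 0 _ _ (hBsubIco i hi) (hBsubIco j hj)
    rw [Set.disjoint_left]
    intro x hx1 hx2
    rcases Nat.lt_or_ge i j with h | h
    · have : (i : ℝ) + 1 ≤ (j : ℝ) := by exact_mod_cast h
      nlinarith [hx1.2, hx2.1]
    · have hji : j < i := by omega
      have : (j : ℝ) + 1 ≤ (i : ℝ) := by exact_mod_cast hji
      nlinarith [hx2.2, hx1.1]
  have hcover : Vᶜ ⊆ ⋃ j ∈ Finset.range N, B j := by
    intro x hx
    obtain ⟨r, hr, hrx⟩ := circ_rep (f x)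
    set j : ℕ := ⌊r / (2 * t)⌋₊ with hj
    have h2t : 0 < 2 * t := by linarith
    have hjle : (j : ℝ) ≤ r / (2 * t) := Nat.floor_le (div_nonneg hr.1 h2t.le)
    have hjlt : r / (2 * t) < (j : ℝ) + 1 := Nat.lt_floor_add_one _
    have h1 : 2 * (j : ℝ) * t ≤ r := by
      have := mul_le_mul_of_nonneg_right hjle h2t.le
      rw [div_mul_cancel₀ _ (ne_of_gt h2t)] at this
      nlinarith
    have h2 : r < 2 * ((j : ℝ) + 1) * t := by
      have := mul_lt_mul_of_pos_right hjlt h2t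
      rw [div_mul_cancel₀ _ (ne_of_gt h2t)] at this
      nlinarith
    have hjN : j < N := by
      by_contra hc
      push_neg at hc
      have : (N : ℝ) ≤ (j : ℝ) := by exact_mod_cast hc
      have : 2 * (N : ℝ) * t ≤ 2 * (j : ℝ) * t := by nlinarith
      rw [htN] at this
      linarith [hr.2, h1]
    rcases le_or_gt r (2 * (j : ℝ) * t + t) with hcase | hcase
    · exfalso
      apply hx
      rw [hV]
      apply Set.mem_biUnion (Finset.mem_range.mpr hjN)
      exact ⟨r, ⟨h1, hcase⟩, hrx⟩
    · apply Set.mem_biUnion (Finset.mem_range.mpr hjN)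
      refine ⟨r, ⟨?_, ?_⟩, hrx⟩
      · nlinarith
      · nlinarith
  -- bound on compacts inside the complement
  have hKbound : ∀ K : Set Torus2, IsCompact K → K ⊆ Vᶜ →
      σ K ≤ (N : ℝ) * (1 / (2 * (N : ℝ) - 1)) := by
    intro K hK hKV
    set KK : ℕ → Set Torus2 :=
      fun j => K ∩ (⋃ i ∈ Finset.range N, ⋃ (_ : i ≠ j), B i)ᶜ with hKK
    have hKKc : ∀ j, IsCompact (KK j) := by
      intro j
      apply IsClosed.isCompact
      apply hK.isClosed.inter
      apply isClosed_compl_iff.mpr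
      apply isOpen_biUnion
      intro i _
      exact isOpen_iUnion fun _ => hPIoo_open _ _
    have hKcovers : ∀ x ∈ K, ∃ i, i < N ∧ x ∈ B i := by
      intro x hx
      have := hcover (hKV hx)
      rw [Set.mem_iUnion₂] at this
      obtain ⟨i, hi, hxi⟩ := this
      exact ⟨i, Finset.mem_range.mp hi, hxi⟩
    have hKKsub : ∀ j, j < N → KK j ⊆ B j := by
      intro j hj x hx
      obtain ⟨i, hiN, hxi⟩ := hKcovers x hx.1
      by_cases hij : i = j
      · rwa [← hij]
      · exfalso
        apply hx.2
        exact Set.mem_biUnion (Finset.mem_range.mpr hiN) (Set.mem_iUnion.mpr ⟨hij, hxi⟩)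
    have hKeq : K = ⋃ j ∈ Finset.range N, KK j := by
      apply Set.Subset.antisymm
      · intro x hx
        obtain ⟨i, hiN, hxi⟩ := hKcovers x hx
        apply Set.mem_biUnion (Finset.mem_range.mpr hiN)
        refine ⟨hx, ?_⟩
        intro hmem
        rw [Set.mem_iUnion₂] at hmem
        obtain ⟨i', hi', hmem⟩ := hmem
        rw [Set.mem_iUnion] at hmem
        obtain ⟨hne, hxi'⟩ := hmem
        exact Set.disjoint_left.mp
          (hBdisj i' i (Finset.mem_range.mp hi') hiN hne) hxi' hxi
      · exact Set.iUnion₂_subset fun j _ => Set.inter_subset_left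
    have hKKd : ∀ i j, i < N → j < N → i ≠ j → Disjoint (KK i) (KK j) :=
      fun i j hi hj hij =>
        Set.disjoint_of_subset (hKKsub i hi) (hKKsub j hj) (hBdisj i j hi hj hij)
    have hσK : σ K = ∑ j ∈ Finset.range N, σ (KK j) := by
      rw [hKeq]
      exact itm_sum hσ KK N (fun i _ => hKKc i) hKKd
    have hKKle : ∀ j, j < N → σ (KK j) ≤ 1 / (2 * (N : ℝ) - 1) := by
      intro j hj
      have hk := key ((2 * (j : ℝ) + 1) * t) (KK j) (hKKc j) (hKKsub j hj)
      rw [le_div_iff₀ h2N1, mul_comm]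
      exact hk
    rw [hσK]
    calc ∑ j ∈ Finset.range N, σ (KK j)
        ≤ ∑ j ∈ Finset.range N, (1 / (2 * (N : ℝ) - 1)) := by
          apply Finset.sum_le_sum
          intro j hj
          exact hKKle j (Finset.mem_range.mp hj)
      _ = (N : ℝ) * (1 / (2 * (N : ℝ) - 1)) := by
          rw [Finset.sum_const, Finset.card_range, nsmul_eq_mul]
  have hVopen : IsOpen Vᶜ := isOpen_compl_iff.mpr hVcpt.isClosed
  have hVcle : σ Vᶜ ≤ (N : ℝ) * (1 / (2 * (N : ℝ) - 1)) := itm_open_le hσ hVopen hKbound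
  -- final arithmetic
  have hmain : 1 - (N : ℝ) * w ≤ (N : ℝ) * (1 / (2 * (N : ℝ) - 1)) := by
    rw [hσV] at hcompl
    linarith
  have hfinal : 1 / (N : ℝ) - 1 / (2 * (N : ℝ) - 1) ≤ w := by
    rw [div_sub_div _ _ (ne_of_gt hNpos) (ne_of_gt h2N1), div_le_iff₀ (by positivity)]
    have h1 : (N : ℝ) * (1 / (2 * (N : ℝ) - 1)) = (N : ℝ) / (2 * (N : ℝ) - 1) := by
      rw [mul_one_div]
    rw [h1, le_div_iff₀ h2N1] at hmain
    nlinarith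
  exact hfinal
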